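/- Stochastic monotonicity of exit times for biased random walk (increasing branch): Let 0 < p₁ < p₂ ≤ 1/2, and let S^{p₁} and S^{p₂} be biased simple random walks started at 0 with up-step probabilities p₁ and p₂ respectively. For k a positive integer and σ_{p}^{k} = inf{n : S_n^{p} ∈ {k, -k}}, for every n ∈ ℕ one has ℙ(σ_{p₁}^{k} > n) ≤ ℙ(σ_{p₂}^{k} > n). -/

import Mathlib

open MeasureTheory ProbabilityTheory

/-- The partial-sum (random walk) process associated to a step process `X`. -/
noncomputable def walk {Ω : Type*} (X : ℕ → Ω → ℤ) (n : ℕ) (ω : Ω) : ℤ :=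
  ∑ j ∈ Finset.range n, X j ω

/-- The exit time `σ = inf {n : S_n = ±k}` of the walk from `(-k, k)`, valued in `ℕ∞`
(with `inf ∅ = ⊤`). -/
noncomputable def exitTime {Ω : Type*} (X : ℕ → Ω → ℤ) (k : ℕ) (ω : Ω) : ℕ∞ :=
  sInf {t : ℕ∞ | ∃ m : ℕ, t = (m : ℕ∞) ∧ (walk X m ω = (k : ℤ) ∨ walk X m ω = -(k : ℤ))}

/-- `X` is a sequence of i.i.d. `±1`-valued steps with `P(X_i = 1) = p` and
`P(X_i = -1) = 1 - p`. -/
def IsBiasedWalkSteps {Ω : Type*} [MeasurableSpace Ω] (P : Measure Ω)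
    (X : ℕ → Ω → ℤ) (p : ℝ) : Prop :=
  (∀ i, Measurable (X i)) ∧
  iIndepFun X P ∧
  (∀ i, P {ω | X i ω = 1} = ENNReal.ofReal p) ∧
  (∀ i, P {ω | X i ω = -1} = ENNReal.ofReal (1 - p))



namespace RWAux

/-- Up-transition probability of the absolute-value chain. -/
noncomputable def rr (p : ℝ) (a : ℕ) : ℝ :=
  (p ^ (a + 1) + (1 - p) ^ (a + 1)) / (p ^ a + (1 - p) ^ a)

/-- Survival function of the absolute-value chain killed at `k`. -/
noncomputable def V (p : ℝ) (k : ℕ) : ℕ → ℕ → ℝ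
  | a, 0 => if a < k then 1 else 0
  | a, n + 1 =>
    if a < k then
      (if a = 0 then V p k 1 n
       else rr p a * V p k (a + 1) n + (1 - rr p a) * V p k (a - 1) n)
    else 0

section rr

variable {p : ℝ}

lemma den_pos (hp : 0 < p) (hp2 : p ≤ 1 / 2) (a : ℕ) : 0 < p ^ a + (1 - p) ^ a := by
  have h1 : (0:ℝ) < 1 - p := by linarith
  positivity

lemma rr_nonneg (hp : 0 < p) (hp2 : p ≤ 1 / 2) (a : ℕ) : 0 ≤ rr p a := by
  have h1 : (0:ℝ) < 1 - p := by linarith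
  have := den_pos (p := p) hp hp2 a
  unfold rr
  positivity

lemma rr_le_one (hp : 0 < p) (hp2 : p ≤ 1 / 2) (a : ℕ) : rr p a ≤ 1 := by
  have h1 : (0:ℝ) < 1 - p := by linarith
  have hd := den_pos (p := p) hp hp2 a
  rw [rr, div_le_one hd]
  have h2 : p ^ (a+1) ≤ p ^ a := by
    calc p ^ (a+1) = p ^ a * p := by ring
    _ ≤ p ^ a * 1 := by nlinarith [pow_nonneg hp.le a]
    _ = p ^ a := by ring
  have h3 : (1-p) ^ (a+1) ≤ (1-p) ^ a := by
    calc (1-p) ^ (a+1) = (1-p) ^ a * (1-p) := by ring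
    _ ≤ (1-p) ^ a * 1 := by nlinarith [pow_nonneg h1.le a]
    _ = (1-p) ^ a := by ring
  linarith

lemma rr_mul_den (hp : 0 < p) (hp2 : p ≤ 1 / 2) (a : ℕ) : (p ^ a + (1 - p) ^ a) * rr p a = p ^ (a+1) + (1-p) ^ (a+1) := by
  rw [rr, mul_div_cancel₀]
  exact (den_pos hp hp2 a).ne'

lemma one_sub_rr_mul_den (hp : 0 < p) (hp2 : p ≤ 1 / 2) (a : ℕ) :
    (p ^ (a+1) + (1 - p) ^ (a+1)) * (1 - rr p (a+1)) =
      p * (1-p) * (p ^ a + (1-p) ^ a) := by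
  have h := rr_mul_den (p := p) hp hp2 (a+1)
  have : (p ^ (a+1) + (1 - p) ^ (a+1)) * (1 - rr p (a+1))
      = (p ^ (a+1) + (1 - p) ^ (a+1)) - (p ^ (a+1) + (1 - p) ^ (a+1)) * rr p (a+1) := by ring
  rw [this, h]; ring

lemma rr_mono_succ (hp : 0 < p) (hp2 : p ≤ 1 / 2) (a : ℕ) : rr p a ≤ rr p (a+1) := by
  have h1 : (0:ℝ) < 1 - p := by linarith
  have hda := den_pos (p := p) hp hp2 a
  have hdb := den_pos (p := p) hp hp2 (a+1)
  rw [rr, rr, div_le_div_iff₀ hda hdb]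
  simp only [pow_succ]
  nlinarith [mul_nonneg (mul_nonneg (pow_nonneg hp.le a) (pow_nonneg h1.le a)) (sq_nonneg (p - (1-p)))]

lemma rr_mono (hp : 0 < p) (hp2 : p ≤ 1 / 2) (a b : ℕ) (hab : a ≤ b) : rr p a ≤ rr p b := by
  induction b with
  | zero => simp_all
  | succ b ih =>
    rcases Nat.lt_or_ge a (b+1) with h | h
    · exact le_trans (ih (Nat.lt_succ_iff.mp h)) (rr_mono_succ hp hp2 b)
    · have : a = b + 1 := le_antisymm hab h
      subst this; rfl

lemma rr_anti {p₁ p₂ : ℝ} (h1 : 0 < p₁) (h12 : p₁ ≤ p₂) (h2 : p₂ ≤ 1/2) (a : ℕ) :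
    rr p₂ a ≤ rr p₁ a := by
  have hq1 : (0:ℝ) < 1 - p₁ := by linarith
  have hq2 : (0:ℝ) < 1 - p₂ := by linarith
  have hp2 : (0:ℝ) < p₂ := lt_of_lt_of_le h1 h12
  have hd1 := den_pos (p := p₁) h1 (le_trans h12 h2) a
  have hd2 := den_pos (p := p₂) hp2 h2 a
  rw [rr, rr, div_le_div_iff₀ hd2 hd1]
  simp only [pow_succ]
  -- facts : p₁^a * p₂^a ≤ (1-p₁)^a * (1-p₂)^a , p₁^a * (1-p₂)^a ≤ (1-p₁)^a * p₂^a
  have f1 : p₁ ^ a * p₂ ^ a ≤ (1-p₁) ^ a * (1-p₂) ^ a := by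
    rw [← mul_pow, ← mul_pow]
    apply pow_le_pow_left₀ (by positivity)
    nlinarith
  have f2 : p₁ ^ a * (1-p₂) ^ a ≤ (1-p₁) ^ a * p₂ ^ a := by
    rw [← mul_pow, ← mul_pow]
    apply pow_le_pow_left₀ (by positivity)
    nlinarith
  nlinarith [mul_nonneg (sub_nonneg.mpr h12) (sub_nonneg.mpr f1),
    mul_nonneg (by linarith : (0:ℝ) ≤ 1 - p₁ - p₂) (sub_nonneg.mpr f2)]

end rr


section Vlem

variable {p : ℝ} {k : ℕ}

lemma V_zero (a : ℕ) : V p k a 0 = if a < k then 1 else 0 := by rw [V]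

lemma V_succ (a n : ℕ) : V p k a (n+1) =
    if a < k then
      (if a = 0 then V p k 1 n
       else rr p a * V p k (a + 1) n + (1 - rr p a) * V p k (a - 1) n)
    else 0 := by rw [V]

lemma V_stop {a : ℕ} (h : ¬ a < k) (n : ℕ) : V p k a n = 0 := by
  cases n with
  | zero => rw [V_zero, if_neg h]
  | succ n => rw [V_succ, if_neg h]

lemma V_succ_zero (hk : 0 < k) (n : ℕ) : V p k 0 (n+1) = V p k 1 n := by
  rw [V_succ, if_pos hk, if_pos rfl]

lemma V_succ_pos {a : ℕ} (hak : a < k) (ha0 : a ≠ 0) (n : ℕ) :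
    V p k a (n+1) = rr p a * V p k (a + 1) n + (1 - rr p a) * V p k (a - 1) n := by
  rw [V_succ, if_pos hak, if_neg ha0]

lemma V_nonneg (hp : 0 < p) (hp2 : p ≤ 1 / 2) (n : ℕ) : ∀ a, 0 ≤ V p k a n := by
  induction n with
  | zero => intro a; rw [V_zero]; split <;> norm_num
  | succ n ih =>
    intro a
    by_cases hak : a < k
    · by_cases ha0 : a = 0
      · subst ha0; rw [V_succ_zero hak]; exact ih 1
      · rw [V_succ_pos hak ha0]
        have h0 := rr_nonneg hp hp2 a
        have h1 := rr_le_one hp hp2 a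
        have i1 := ih (a+1)
        have i2 := ih (a-1)
        nlinarith
    · rw [V_stop hak]

lemma V_le_one (hp : 0 < p) (hp2 : p ≤ 1 / 2) (n : ℕ) : ∀ a, V p k a n ≤ 1 := by
  induction n with
  | zero => intro a; rw [V_zero]; split <;> norm_num
  | succ n ih =>
    intro a
    by_cases hak : a < k
    · by_cases ha0 : a = 0
      · subst ha0; rw [V_succ_zero hak]; exact ih 1
      · rw [V_succ_pos hak ha0]
        have h0 := rr_nonneg hp hp2 a
        have h1 := rr_le_one hp hp2 a
        have i1 := ih (a+1)
        have i2 := ih (a-1)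
        have j1 := V_nonneg (k := k) hp hp2 n (a+1)
        have j2 := V_nonneg (k := k) hp hp2 n (a-1)
        nlinarith
    · rw [V_stop hak]; norm_num

lemma V_succ_le (hp : 0 < p) (hp2 : p ≤ 1 / 2) (n : ℕ) :
    ∀ a, V p k a (n+1) ≤ V p k a n := by
  induction n with
  | zero =>
    intro a
    by_cases hak : a < k
    · rw [V_zero, if_pos hak]
      exact V_le_one hp hp2 1 a
    · rw [V_stop hak, V_stop hak]
  | succ n ih =>
    intro a
    by_cases hak : a < k
    · by_cases ha0 : a = 0
      · subst ha0; rw [V_succ_zero hak, V_succ_zero hak]; exact ih 1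
      · rw [V_succ_pos hak ha0, V_succ_pos hak ha0]
        have h0 := rr_nonneg hp hp2 a
        have h1 := rr_le_one hp hp2 a
        have i1 := ih (a+1)
        have i2 := ih (a-1)
        nlinarith
    · rw [V_stop hak, V_stop hak]

lemma V_anti (hp : 0 < p) (hp2 : p ≤ 1 / 2) (n : ℕ) :
    ∀ a b, a ≤ b → V p k b n ≤ V p k a n := by
  induction n with
  | zero =>
    intro a b hab
    rw [V_zero, V_zero]
    split_ifs with hb ha ha
    · exact le_refl _
    · exact absurd (lt_of_le_of_lt hab hb) ha
    · norm_num
    · exact le_refl _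
  | succ n ih =>
    intro a b hab
    by_cases hbk : b < k
    · rcases eq_or_lt_of_le hab with rfl | hlt
      · exact le_refl _
      · have hak : a < k := lt_trans hlt hbk
        by_cases ha0 : a = 0
        · subst ha0
          rw [V_succ_zero hak]
          by_cases hb1 : b = 1
          · subst hb1
            exact V_succ_le hp hp2 n 1
          · have hb2 : 2 ≤ b := by omega
            rw [V_succ_pos hbk (by omega)]
            have e3 : V p k (b+1) n ≤ V p k (b-1) n := ih _ _ (by omega)
            have e4 : V p k (b-1) n ≤ V p k 1 n := ih _ _ (by omega)
            have h0 := rr_nonneg hp hp2 b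
            have h1 := rr_le_one hp hp2 b
            nlinarith
        · rw [V_succ_pos hak ha0, V_succ_pos hbk (by omega)]
          have e1 : V p k (b+1) n ≤ V p k (a+1) n := ih _ _ (by omega)
          have e2 : V p k (b-1) n ≤ V p k (a-1) n := ih _ _ (by omega)
          have e3 : V p k (b+1) n ≤ V p k (b-1) n := ih _ _ (by omega)
          have hr : rr p a ≤ rr p b := rr_mono hp hp2 a b hab
          have h0 := rr_nonneg hp hp2 a
          have h1 := rr_le_one hp hp2 a
          have h2 := rr_le_one hp hp2 b
          nlinarith [mul_nonneg h0 (sub_nonneg.mpr e1),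
            mul_nonneg (by linarith : (0:ℝ) ≤ 1 - rr p a) (sub_nonneg.mpr e2),
            mul_nonneg (sub_nonneg.mpr hr) (sub_nonneg.mpr e3)]
    · rw [V_stop hbk]
      exact V_nonneg hp hp2 _ _

lemma V_mono_p {p₁ p₂ : ℝ} (h1 : 0 < p₁) (h12 : p₁ ≤ p₂) (h2 : p₂ ≤ 1/2) (n : ℕ) :
    ∀ a, V p₁ k a n ≤ V p₂ k a n := by
  have hp2pos : 0 < p₂ := lt_of_lt_of_le h1 h12
  have hp1half : p₁ ≤ 1/2 := le_trans h12 h2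
  induction n with
  | zero => intro a; rw [V_zero, V_zero]
  | succ n ih =>
    intro a
    by_cases hak : a < k
    · by_cases ha0 : a = 0
      · subst ha0; rw [V_succ_zero hak, V_succ_zero hak]; exact ih 1
      · rw [V_succ_pos hak ha0, V_succ_pos hak ha0]
        have ha1 : 1 ≤ a := by omega
        have i1 := ih (a+1)
        have i2 := ih (a-1)
        have j : V p₂ k (a+1) n ≤ V p₂ k (a-1) n :=
          V_anti hp2pos h2 n (a-1) (a+1) (by omega)
        have hr : rr p₂ a ≤ rr p₁ a := rr_anti h1 h12 h2 a
        have h0 := rr_nonneg h1 hp1half a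
        have h1' := rr_le_one h1 hp1half a
        nlinarith [mul_nonneg h0 (sub_nonneg.mpr i1),
          mul_nonneg (by linarith : (0:ℝ) ≤ 1 - rr p₁ a) (sub_nonneg.mpr i2),
          mul_nonneg (sub_nonneg.mpr hr) (sub_nonneg.mpr j)]
    · rw [V_stop hak, V_stop hak]

end Vlem

section Tlem

/-- Signed survival recursion: probability the walk started at `a` avoids `±k` for `n` steps. -/
noncomputable def T (p : ℝ) (k : ℕ) : ℤ → ℕ → ℝ
  | a, 0 => if a = (k : ℤ) ∨ a = -(k : ℤ) then 0 else 1
  | a, n + 1 =>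
    if a = (k : ℤ) ∨ a = -(k : ℤ) then 0
    else p * T p k (a + 1) n + (1 - p) * T p k (a - 1) n

variable {p : ℝ} {k : ℕ}

lemma T_zero (a : ℤ) : T p k a 0 = if a = (k : ℤ) ∨ a = -(k : ℤ) then 0 else 1 := by rw [T]

lemma T_succ (a : ℤ) (n : ℕ) : T p k a (n+1) =
    if a = (k : ℤ) ∨ a = -(k : ℤ) then 0
    else p * T p k (a + 1) n + (1 - p) * T p k (a - 1) n := by rw [T]

lemma key_identity (hp : 0 < p) (hp2 : p ≤ 1/2) (hk : 0 < k) (n : ℕ) :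
    ∀ a : ℕ, a ≤ k →
      p ^ a * T p k (a : ℤ) n + (1 - p) ^ a * T p k (-(a : ℤ)) n
        = (p ^ a + (1 - p) ^ a) * V p k a n := by
  induction n with
  | zero =>
    intro a hak
    rcases eq_or_lt_of_le hak with rfl | hlt
    · rw [T_zero, T_zero, V_zero, if_pos (Or.inl rfl), if_pos (Or.inr rfl),
        if_neg (lt_irrefl _)]
      ring
    · have h1 : ¬((a : ℤ) = (k : ℤ) ∨ (a : ℤ) = -(k : ℤ)) := by push_neg; omega
      have h2 : ¬((-(a : ℤ)) = (k : ℤ) ∨ (-(a : ℤ)) = -(k : ℤ)) := by push_neg; omega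
      rw [T_zero, T_zero, V_zero, if_neg h1, if_neg h2, if_pos hlt]
      ring
  | succ n ih =>
    intro a hak
    rcases eq_or_lt_of_le hak with rfl | hlt
    · rw [T_succ, T_succ, if_pos (Or.inl rfl), if_pos (Or.inr rfl), V_stop (lt_irrefl _)]
      ring
    · by_cases ha0 : a = 0
      · subst ha0
        have h1 : ¬((0 : ℤ) = (k : ℤ) ∨ (0 : ℤ) = -(k : ℤ)) := by push_neg; omega
        rw [V_succ_zero hk]
        simp only [Nat.cast_zero, neg_zero, pow_zero, one_mul]
        rw [T_succ, if_neg h1]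
        have e1 : (0 : ℤ) + 1 = ((1 : ℕ) : ℤ) := by norm_num
        have e2 : (0 : ℤ) - 1 = -((1 : ℕ) : ℤ) := by norm_num
        rw [e1, e2]
        have ih1 := ih 1 hk
        simp only [pow_one] at ih1
        linear_combination 2 * ih1
      · obtain ⟨b, rfl⟩ : ∃ b, a = b + 1 := ⟨a - 1, by omega⟩
        have h1 : ¬(((b+1 : ℕ) : ℤ) = (k : ℤ) ∨ ((b+1 : ℕ) : ℤ) = -(k : ℤ)) := by
          push_neg; omega
        have h2 : ¬((-((b+1 : ℕ) : ℤ)) = (k : ℤ) ∨ (-((b+1 : ℕ) : ℤ)) = -(k : ℤ)) := by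
          push_neg; omega
        rw [T_succ, T_succ, if_neg h1, if_neg h2, V_succ_pos hlt (Nat.succ_ne_zero b)]
        have eA : ((b+1 : ℕ) : ℤ) + 1 = ((b + 2 : ℕ) : ℤ) := by push_cast; ring
        have eB : ((b+1 : ℕ) : ℤ) - 1 = ((b : ℕ) : ℤ) := by push_cast; ring
        have eC : -((b+1 : ℕ) : ℤ) + 1 = -((b : ℕ) : ℤ) := by push_cast; ring
        have eD : -((b+1 : ℕ) : ℤ) - 1 = -((b + 2 : ℕ) : ℤ) := by push_cast; ring
        rw [eA, eB, eC, eD]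
        have ihp := ih (b + 2) (by omega)
        have ihm := ih b (by omega)
        have hr1 : (p ^ (b+1) + (1-p) ^ (b+1)) * rr p (b+1) = p ^ (b+2) + (1-p) ^ (b+2) :=
          rr_mul_den hp hp2 (b+1)
        have hr2 : (p ^ (b+1) + (1 - p) ^ (b+1)) * (1 - rr p (b+1))
            = p * (1-p) * (p ^ b + (1-p) ^ b) := one_sub_rr_mul_den hp hp2 b
        have eE : b + 1 + 1 = b + 2 := rfl
        have eF : b + 1 - 1 = b := rfl
        rw [eE, eF]
        linear_combination ihp + p * (1-p) * ihm - V p k (b+2) n * hr1 - V p k b n * hr2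

lemma T_eq_V (hp : 0 < p) (hp2 : p ≤ 1/2) (hk : 0 < k) (n : ℕ) :
    T p k 0 n = V p k 0 n := by
  have h := key_identity hp hp2 hk n 0 (Nat.zero_le k)
  simp only [pow_zero, one_mul, Nat.cast_zero, neg_zero] at h
  linarith

end Tlem

section Flem

def stepZ (b : Bool) : ℤ := if b then 1 else -1

def extb {n : ℕ} (s : Fin n → Bool) (j : ℕ) : Bool := if h : j < n then s ⟨j, h⟩ else true

def pSum {n : ℕ} (s : Fin n → Bool) (m : ℕ) : ℤ := ∑ j ∈ Finset.range m, stepZ (extb s j)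

def adm (k : ℕ) {n : ℕ} (a : ℤ) (s : Fin n → Bool) : Prop :=
  ∀ m ≤ n, ¬(a + pSum s m = (k : ℤ) ∨ a + pSum s m = -(k : ℤ))

instance {k n : ℕ} {a : ℤ} {s : Fin n → Bool} : Decidable (adm k a s) := by
  unfold adm; infer_instance

def wt (p : ℝ) {n : ℕ} (s : Fin n → Bool) : ℝ := ∏ i, (if s i then p else 1 - p)

noncomputable def F (p : ℝ) (k : ℕ) (a : ℤ) (n : ℕ) : ℝ :=
  ∑ s : Fin n → Bool, if adm k a s then wt p s else 0

variable {p : ℝ} {k n : ℕ}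

lemma extb_cons_zero (b : Bool) (s : Fin n → Bool) : extb (Fin.cons b s) 0 = b := by
  simp [extb]

lemma extb_cons_succ (b : Bool) (s : Fin n → Bool) (j : ℕ) :
    extb (Fin.cons b s) (j + 1) = extb s j := by
  unfold extb
  by_cases h : j < n
  · rw [dif_pos (by omega : j + 1 < n + 1), dif_pos h]
    have : (⟨j + 1, by omega⟩ : Fin (n+1)) = Fin.succ ⟨j, h⟩ := rfl
    rw [this, Fin.cons_succ]
  · rw [dif_neg (by omega), dif_neg h]

lemma extb_val (s : Fin n → Bool) (j : Fin n) : extb s (j : ℕ) = s j := by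
  simp [extb]

lemma stepZ_injective : Function.Injective stepZ := by
  intro a b h
  cases a <;> cases b <;> first | rfl | (exfalso; norm_num [stepZ] at h)

lemma pSum_zero (s : Fin n → Bool) : pSum s 0 = 0 := by simp [pSum]

lemma pSum_cons (b : Bool) (s : Fin n → Bool) (m : ℕ) :
    pSum (Fin.cons b s) (m + 1) = stepZ b + pSum s m := by
  unfold pSum
  rw [Finset.sum_range_succ']
  simp only [extb_cons_succ, extb_cons_zero]
  ring

lemma adm_cons (a : ℤ) (b : Bool) (s : Fin n → Bool) :
    adm k a (Fin.cons b s) ↔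
      (¬(a = (k : ℤ) ∨ a = -(k : ℤ))) ∧ adm k (a + stepZ b) s := by
  constructor
  · intro h
    refine ⟨by simpa [pSum_zero] using h 0 (Nat.zero_le _), fun m hm => by
      simpa [pSum_cons, add_assoc] using h (m+1) (by omega)⟩
  · rintro ⟨h0, h⟩ m hm
    cases m with
    | zero => simpa [pSum_zero] using h0
    | succ m => simpa [pSum_cons, add_assoc] using h m (by omega)

lemma wt_cons (b : Bool) (s : Fin n → Bool) :
    wt p (Fin.cons b s) = (if b then p else 1 - p) * wt p s := by
  unfold wt
  rw [Fin.prod_univ_succ]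
  simp

lemma wt_nonneg (hp : 0 ≤ p) (hp1 : p ≤ 1) (s : Fin n → Bool) : 0 ≤ wt p s := by
  unfold wt
  apply Finset.prod_nonneg
  intro i _
  split <;> linarith

lemma F_eq_T (hk : 0 < k) (n : ℕ) : ∀ a : ℤ, F p k a n = T p k a n := by
  induction n with
  | zero =>
    intro a
    rw [T_zero]
    unfold F
    rw [Finset.sum_eq_single_of_mem (fun _ => true) (Finset.mem_univ _)
      (fun s _ hs => absurd (Subsingleton.elim s _) hs)]
    have hwt : wt p (fun _ : Fin 0 => true) = 1 := by simp [wt]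
    have hadm : adm k a (fun _ : Fin 0 => true) ↔ ¬(a = (k:ℤ) ∨ a = -(k:ℤ)) := by
      constructor
      · intro h; simpa [pSum_zero] using h 0 le_rfl
      · intro h m hm
        interval_cases m
        simpa [pSum_zero] using h
    rw [hwt]
    by_cases hb : a = (k:ℤ) ∨ a = -(k:ℤ)
    · rw [if_neg (fun h => (hadm.mp h) hb), if_pos hb]
    · rw [if_pos (hadm.mpr hb), if_neg hb]
  | succ n ih =>
    intro a
    rw [T_succ]
    unfold F
    rw [← (Fin.consEquiv (fun _ : Fin (n+1) => Bool)).sum_comp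
      (fun s => if adm k a s then wt p s else 0)]
    rw [Fintype.sum_prod_type]
    by_cases hb : a = (k:ℤ) ∨ a = -(k:ℤ)
    · rw [if_pos hb]
      apply Finset.sum_eq_zero
      intro b _
      apply Finset.sum_eq_zero
      intro s _
      rw [if_neg]
      intro h
      have := (adm_cons a b s).mp (by simpa [Fin.consEquiv] using h)
      exact this.1 hb
    · rw [if_neg hb]
      have hterm : ∀ (b : Bool) (s : Fin n → Bool),
          (if adm k a ((Fin.consEquiv (fun _ : Fin (n+1) => Bool)) (b, s))
            then wt p ((Fin.consEquiv (fun _ : Fin (n+1) => Bool)) (b, s)) else 0)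
          = (if b then p else 1 - p) * (if adm k (a + stepZ b) s then wt p s else 0) := by
        intro b s
        have hc : (Fin.consEquiv (fun _ : Fin (n+1) => Bool)) (b, s) = Fin.cons b s := rfl
        rw [hc, wt_cons]
        by_cases h : adm k (a + stepZ b) s
        · rw [if_pos ((adm_cons a b s).mpr ⟨hb, h⟩), if_pos h]
        · rw [if_neg (fun hh => h ((adm_cons a b s).mp hh).2), if_neg h, mul_zero]
      simp only [hterm]
      rw [Fintype.sum_bool]
      simp only [← Finset.mul_sum]
      have hT : a + stepZ true = a + 1 := rfl
      have hF : a + stepZ false = a - 1 := by simp [stepZ]; ring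
      rw [hT, hF,
        show (∑ s : Fin n → Bool, if adm k (a+1) s then wt p s else 0) = F p k (a+1) n from rfl,
        show (∑ s : Fin n → Bool, if adm k (a-1) s then wt p s else 0) = F p k (a-1) n from rfl,
        ih, ih]
      simp

end Flem

section Meas

open MeasureTheory ProbabilityTheory

variable {Ω : Type*} [MeasurableSpace Ω]

lemma exit_set_eq (X : ℕ → Ω → ℤ) (k n : ℕ) :
    {ω | (n : ℕ∞) < exitTime X k ω}
      = {ω | ∀ m ≤ n, ¬(walk X m ω = (k : ℤ) ∨ walk X m ω = -(k : ℤ))} := by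
  ext ω
  simp only [Set.mem_setOf_eq]
  constructor
  · intro h m hm hbad
    have hle : exitTime X k ω ≤ (m : ℕ∞) := sInf_le ⟨m, rfl, hbad⟩
    have : (n : ℕ∞) < (m : ℕ∞) := lt_of_lt_of_le h hle
    exact absurd (by exact_mod_cast this) (not_lt.mpr hm)
  · intro h
    have hge : ((n + 1 : ℕ) : ℕ∞) ≤ exitTime X k ω := by
      apply le_sInf
      rintro t ⟨m, rfl, hbad⟩
      have hmn : n < m := by
        by_contra hc
        exact h m (not_lt.mp hc) hbad
      exact_mod_cast hmn
    calc (n : ℕ∞) < ((n + 1 : ℕ) : ℕ∞) := by exact_mod_cast Nat.lt_succ_self n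
      _ ≤ _ := hge

lemma meas_exit_eq (P : Measure Ω) [IsProbabilityMeasure P]
    (X : ℕ → Ω → ℤ) {p : ℝ} (hp0 : 0 < p) (hp1 : p ≤ 1)
    (hX : IsBiasedWalkSteps P X p) (k n : ℕ) :
    P {ω | (n : ℕ∞) < exitTime X k ω} = ENNReal.ofReal (F p k 0 n) := by
  obtain ⟨hmeas, hindep, hP1, hP2⟩ := hX
  rw [exit_set_eq]
  set E := {ω | ∀ m ≤ n, ¬(walk X m ω = (k : ℤ) ∨ walk X m ω = -(k : ℤ))} with hE
  set G := ⋂ i ∈ Finset.range n, {ω | X i ω = 1 ∨ X i ω = -1} with hG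
  have hsing : ∀ (i : ℕ) (c : ℤ), {ω | X i ω = c} = X i ⁻¹' {c} := by
    intro i c; ext ω; simp
  have honeset : ∀ i : ℕ, P {ω | X i ω = 1 ∨ X i ω = -1} = 1 := by
    intro i
    have hu : {ω | X i ω = 1 ∨ X i ω = -1} = {ω | X i ω = 1} ∪ {ω | X i ω = -1} := rfl
    have hd : Disjoint {ω | X i ω = 1} {ω | X i ω = -1} := by
      rw [Set.disjoint_left]
      intro ω hω1 hω2
      simp only [Set.mem_setOf_eq] at hω1 hω2
      omega
    have hm2 : MeasurableSet {ω | X i ω = -1} := by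
      rw [hsing]; exact (hmeas i) (measurableSet_singleton _)
    rw [hu, measure_union hd hm2, hP1 i, hP2 i,
      ← ENNReal.ofReal_add (le_of_lt hp0) (by linarith)]
    norm_num
  have hsmeas : ∀ i : ℕ, MeasurableSet {ω | X i ω = 1 ∨ X i ω = -1} := by
    intro i
    have : {ω | X i ω = 1 ∨ X i ω = -1} = X i ⁻¹' ({1} ∪ {-1}) := by
      ext ω; simp [or_comm]
    rw [this]
    exact (hmeas i) ((measurableSet_singleton _).union (measurableSet_singleton _))
  have hGc : P Gᶜ = 0 := by
    rw [hG, Set.compl_iInter₂]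
    refine (measure_biUnion_null_iff (Set.Finite.countable (Finset.finite_toSet _))).mpr ?_
    intro i _
    exact (prob_compl_eq_zero_iff (hsmeas i)).mpr (honeset i)
  -- the path cylinders
  set C : (Fin n → Bool) → Set Ω :=
    fun s => ⋂ i ∈ Finset.range n, X i ⁻¹' {stepZ (extb s i)} with hC
  have hCmeas : ∀ s, MeasurableSet (C s) := by
    intro s
    apply Finset.measurableSet_biInter
    intro i _
    exact (hmeas i) (measurableSet_singleton _)
  -- walk determined on cylinders
  have hwalk : ∀ (s : Fin n → Bool) (ω : Ω), ω ∈ C s → ∀ m ≤ n, walk X m ω = pSum s m := by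
    intro s ω hω m hm
    unfold walk pSum
    apply Finset.sum_congr rfl
    intro j hj
    have hjn : j ∈ Finset.range n := by
      simp only [Finset.mem_range] at hj ⊢; omega
    have := Set.mem_iInter₂.mp hω j hjn
    simpa using this
  -- E ∩ G as a disjoint union of cylinders
  have hEG : E ∩ G = ⋃ s ∈ Finset.univ.filter (fun s : Fin n → Bool => adm k (0 : ℤ) s), C s := by
    ext ω
    simp only [Set.mem_iUnion, Finset.mem_filter, Finset.mem_univ, true_and, Set.mem_inter_iff]
    constructor
    · rintro ⟨hωE, hωG⟩
      refine ⟨fun j => decide (X j ω = 1), ?_, ?_⟩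
      · -- admissible
        intro m hm hbad
        apply hωE m hm
        have hωC : ω ∈ C (fun j => decide (X j ω = 1)) := by
          rw [hC]
          apply Set.mem_iInter₂.mpr
          intro i hi
          have hig := Set.mem_iInter₂.mp hωG i hi
          simp only [Set.mem_setOf_eq] at hig
          have hin : (i : ℕ) < n := Finset.mem_range.mp hi
          simp only [Set.mem_preimage, Set.mem_singleton_iff, extb, dif_pos hin]
          rcases hig with h1 | h1
          · simp [stepZ, h1]
          · have : ¬ (X i ω = 1) := by omega
            simp [stepZ, h1, this]
        rw [hwalk _ ω hωC m hm]
        simpa using hbad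
      · rw [hC]
        apply Set.mem_iInter₂.mpr
        intro i hi
        have hig := Set.mem_iInter₂.mp hωG i hi
        simp only [Set.mem_setOf_eq] at hig
        have hin : (i : ℕ) < n := Finset.mem_range.mp hi
        simp only [Set.mem_preimage, Set.mem_singleton_iff, extb, dif_pos hin]
        rcases hig with h1 | h1
        · simp [stepZ, h1]
        · have : ¬ (X i ω = 1) := by omega
          simp [stepZ, h1, this]
    · rintro ⟨s, hadm, hωC⟩
      constructor
      · intro m hm hbad
        apply hadm m hm
        rw [zero_add, ← hwalk s ω hωC m hm]
        exact hbad
      · apply Set.mem_iInter₂.mpr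
        intro i hi
        have := Set.mem_iInter₂.mp hωC i hi
        simp only [Set.mem_preimage, Set.mem_singleton_iff] at this
        simp only [Set.mem_setOf_eq, this]
        cases (extb s i) <;> simp [stepZ]
  -- P E = P (E ∩ G)
  have hPE : P E = P (E ∩ G) := by
    apply le_antisymm
    · calc P E ≤ P ((E ∩ G) ∪ Gᶜ) := by
            apply measure_mono
            intro ω hω
            by_cases hg : ω ∈ G
            · exact Or.inl ⟨hω, hg⟩
            · exact Or.inr hg
        _ ≤ P (E ∩ G) + P Gᶜ := measure_union_le _ _
        _ = P (E ∩ G) := by rw [hGc, add_zero]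
    · exact measure_mono Set.inter_subset_left
  -- disjointness of cylinders
  have hdisj : (↑(Finset.univ.filter (fun s : Fin n → Bool => adm k (0 : ℤ) s)) : Set (Fin n → Bool)).PairwiseDisjoint C := by
    intro s _ t _ hst
    apply Set.disjoint_left.mpr
    intro ω hωs hωt
    apply hst
    funext j
    have h1 := Set.mem_iInter₂.mp hωs j (Finset.mem_range.mpr j.isLt)
    have h2 := Set.mem_iInter₂.mp hωt j (Finset.mem_range.mpr j.isLt)
    simp only [Set.mem_preimage, Set.mem_singleton_iff] at h1 h2
    have heq : stepZ (extb s j) = stepZ (extb t j) := by rw [← h1, ← h2]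
    have h3 := stepZ_injective heq
    rwa [extb_val, extb_val] at h3
  -- probability of a cylinder
  have hCprob : ∀ s : Fin n → Bool,
      P (C s) = ENNReal.ofReal (wt p s) := by
    intro s
    have := hindep.measure_inter_preimage_eq_mul (Finset.range n)
      (sets := fun i => {stepZ (extb s i)}) (fun i _ => measurableSet_singleton _)
    rw [hC]
    rw [this]
    have hfac : ∀ i : ℕ, P (X i ⁻¹' {stepZ (extb s i)})
        = ENNReal.ofReal (if extb s i then p else 1 - p) := by
      intro i
      cases h : extb s i
      · simp only [stepZ, if_false, Bool.false_eq_true]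
        rw [← hsing]
        simpa using hP2 i
      · simp only [stepZ, if_true]
        rw [← hsing]
        simpa using hP1 i
    rw [Finset.prod_congr rfl (fun i _ => hfac i),
      ← ENNReal.ofReal_prod_of_nonneg (fun i _ => by split <;> linarith)]
    congr 1
    unfold wt
    rw [← Fin.prod_univ_eq_prod_range (fun j => if extb s j then p else 1 - p) n]
    exact Finset.prod_congr rfl (fun j _ => by rw [extb_val])
  -- put it all together
  rw [hPE, hEG, measure_biUnion_finset hdisj (fun s _ => hCmeas s)]
  rw [Finset.sum_congr rfl (fun s _ => hCprob s),
    ← ENNReal.ofReal_sum_of_nonneg (fun s _ => wt_nonneg (le_of_lt hp0) hp1 s)]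
  congr 1
  rw [F, Finset.sum_filter]

end Meas

end RWAux

/-- For `0 < p₁ < p₂ ≤ 1/2`, the exit time of the `p₂`-biased random walk
from `(-k, k)` stochastically dominates that of the `p₁`-biased walk:
`ℙ(σ_{p₁}^k > n) ≤ ℙ(σ_{p₂}^k > n)` for all `n`. -/
theorem rw_exit_time_stochastically_increasing
    {Ω₁ Ω₂ : Type*} [MeasurableSpace Ω₁] [MeasurableSpace Ω₂]
    (P₁ : Measure Ω₁) (P₂ : Measure Ω₂)
    [IsProbabilityMeasure P₁] [IsProbabilityMeasure P₂]
    {p₁ p₂ : ℝ} (h₁ : 0 < p₁) (h₁₂ : p₁ < p₂) (h₂ : p₂ ≤ 1 / 2)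
    (X₁ : ℕ → Ω₁ → ℤ) (X₂ : ℕ → Ω₂ → ℤ)
    (hX₁ : IsBiasedWalkSteps P₁ X₁ p₁) (hX₂ : IsBiasedWalkSteps P₂ X₂ p₂)
    (k : ℕ) (hk : 0 < k) (n : ℕ) :
    P₁ {ω | (n : ℕ∞) < exitTime X₁ k ω} ≤ P₂ {ω | (n : ℕ∞) < exitTime X₂ k ω} := by
  rw [RWAux.meas_exit_eq P₁ X₁ h₁ (by linarith) hX₁ k n,
      RWAux.meas_exit_eq P₂ X₂ (by linarith) (by linarith) hX₂ k n]
  apply ENNReal.ofReal_le_ofReal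
  rw [RWAux.F_eq_T (p := p₁) hk n 0, RWAux.F_eq_T (p := p₂) hk n 0,
      RWAux.T_eq_V h₁ (by linarith) hk n, RWAux.T_eq_V (by linarith) h₂ hk n]
  exact RWAux.V_mono_p h₁ (le_of_lt h₁₂) h₂ n 0
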